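/- With the data fixed as in the context, for all integers m, m' ≥ 1 with m + m' ≤ 2n, one has F(m + m') ≤ F(m) · N^{ m' − t }, where t is the number of blocks B of the partition p∨q with m < max(B) ≤ m + m'. -/

import Mathlib

open Filter

/-- `(k_s, l_s) = σ_s ∘ ε_s (i_s, j_s)`. -/
def klMap {n N : ℕ} (ε : Fin (2 * n) → Bool) (σ : Fin (2 * n) → Equiv.Perm (Fin N × Fin N))
    (x : (Fin (2 * n) → Fin N) × (Fin (2 * n) → Fin N)) (s : Fin (2 * n)) : Fin N × Fin N :=
  if ε s then (σ s) (x.1 s, x.2 s) else (σ s) (x.2 s, x.1 s)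

/-- The set `A^{(p,q)}` of tuples `(i_1, j_1, …, i_{2n}, j_{2n})` with `j_s = i_{s+1}`
(cyclically, so that `j_{2n} = i_1`), `k_s = k_{p(s)}` and `l_s = l_{q(s)}` for all `s`. -/
def tupleSet (n N : ℕ) (ε : Fin (2 * n) → Bool) (σ : Fin (2 * n) → Equiv.Perm (Fin N × Fin N))
    (p q : Equiv.Perm (Fin (2 * n))) :
    Finset ((Fin (2 * n) → Fin N) × (Fin (2 * n) → Fin N)) :=
  Finset.univ.filter fun x =>
    (∀ s, x.2 s = x.1 (finRotate (2 * n) s)) ∧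
    (∀ s, (klMap ε σ x s).1 = (klMap ε σ x (p s)).1) ∧
    (∀ s, (klMap ε σ x s).2 = (klMap ε σ x (q s)).2)

/-- `F(S)`:  the number of families `(i_s, j_s)_{s ∈ S}` that extend to an element of
`A^{(p,q)}`. -/
def Fcnt (n N : ℕ) (ε : Fin (2 * n) → Bool) (σ : Fin (2 * n) → Equiv.Perm (Fin N × Fin N))
    (p q : Equiv.Perm (Fin (2 * n))) (S : Finset (Fin (2 * n))) : ℕ :=
  ((tupleSet n N ε σ p q).image fun x => fun s : {a // a ∈ S} => (x.1 s.1, x.2 s.1)).card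

/-- The join `p ∨ q` of the two pair partitions, as an equivalence relation. -/
def joinRel {m : ℕ} (p q : Equiv.Perm (Fin m)) : Fin m → Fin m → Prop :=
  Relation.EqvGen fun a b => p a = b ∨ q a = b

/-- The set `{1, …, m}` of the paper, in `0`-based indexing: the first `m` indices. -/
def initSeg (n m : ℕ) : Finset (Fin (2 * n)) :=
  Finset.univ.filter fun s => (s : ℕ) < m

section Aux

variable {n N : ℕ} {ε : Fin (2 * n) → Bool} {σ : Fin (2 * n) → Equiv.Perm (Fin N × Fin N)}

lemma joinRel_refl (p q : Equiv.Perm (Fin (2*n))) (a : Fin (2*n)) : joinRel p q a a :=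
  Relation.EqvGen.refl a

lemma joinRel_symm {p q : Equiv.Perm (Fin (2*n))} {a b : Fin (2*n)}
    (h : joinRel p q a b) : joinRel p q b a := Relation.EqvGen.symm _ _ h

lemma joinRel_trans {p q : Equiv.Perm (Fin (2*n))} {a b c : Fin (2*n)}
    (h : joinRel p q a b) (h' : joinRel p q b c) : joinRel p q a c :=
  Relation.EqvGen.trans _ _ _ h h'

lemma block_eq {p q : Equiv.Perm (Fin (2*n))} {a b : Fin (2*n)} (h : joinRel p q a b) :
    {x | joinRel p q a x} = {x | joinRel p q b x} := by
  ext x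
  exact ⟨fun hx => joinRel_trans (joinRel_symm h) hx, fun hx => joinRel_trans h hx⟩

open Classical in
noncomputable def closSet {n : ℕ} (p q : Equiv.Perm (Fin (2*n))) (m T : ℕ) :
    Finset (Fin (2*n)) :=
  Finset.univ.filter fun s => m ≤ (s:ℕ) ∧ (s:ℕ) < T ∧ ∀ u, joinRel p q s u → u ≤ s

lemma mem_closSet {p q : Equiv.Perm (Fin (2*n))} {m T : ℕ} {s : Fin (2*n)} :
    s ∈ closSet p q m T ↔ m ≤ (s:ℕ) ∧ (s:ℕ) < T ∧ ∀ u, joinRel p q s u → u ≤ s := by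
  simp [closSet]

lemma ncard_blocks (p q : Equiv.Perm (Fin (2*n))) (m T : ℕ) :
    Set.ncard {B : Set (Fin (2 * n)) | (∃ a, B = {x | joinRel p q a x}) ∧
      (∃ x ∈ B, m ≤ (x : ℕ)) ∧ ∀ x ∈ B, (x : ℕ) < T} = (closSet p q m T).card := by
  classical
  have himg : {B : Set (Fin (2 * n)) | (∃ a, B = {x | joinRel p q a x}) ∧
      (∃ x ∈ B, m ≤ (x : ℕ)) ∧ ∀ x ∈ B, (x : ℕ) < T}
      = (fun a => {x | joinRel p q a x}) '' ↑(closSet p q m T) := by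
    ext B
    constructor
    · rintro ⟨⟨a, rfl⟩, ⟨x0, hx0B, hx0m⟩, hlt⟩
      set F : Finset (Fin (2*n)) := Finset.univ.filter (fun u => joinRel p q a u) with hF
      have haF : a ∈ F := by simp [hF, joinRel_refl]
      have hne : F.Nonempty := ⟨a, haF⟩
      set s := F.max' hne with hs
      have hsF : s ∈ F := F.max'_mem hne
      have hjas : joinRel p q a s := by simpa [hF] using hsF
      refine ⟨s, ?_, ?_⟩
      · rw [Finset.mem_coe, mem_closSet]
        refine ⟨?_, ?_, ?_⟩
        · have hx0F : x0 ∈ F := by simpa [hF] using hx0B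
          have := F.le_max' x0 hx0F
          exact le_trans hx0m this
        · exact hlt s hjas
        · intro u hu
          have huF : u ∈ F := by
            simp only [hF, Finset.mem_filter, Finset.mem_univ, true_and]
            exact joinRel_trans hjas hu
          exact F.le_max' u huF
      · exact (block_eq hjas).symm
    · rintro ⟨s, hs, rfl⟩
      rw [Finset.mem_coe, mem_closSet] at hs
      obtain ⟨hms, hsT, hmax⟩ := hs
      refine ⟨⟨s, rfl⟩, ⟨s, joinRel_refl p q s, hms⟩, ?_⟩
      intro x hx
      exact lt_of_le_of_lt (hmax x hx) hsT
  rw [himg, Set.ncard_image_of_injOn, Set.ncard_coe_finset]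
  intro s hs s' hs' hss
  rw [Finset.mem_coe, mem_closSet] at hs hs'
  have h1 : joinRel p q s s' := by
    have hss' : {x | joinRel p q s x} = {x | joinRel p q s' x} := hss
    have h0 : s' ∈ {x | joinRel p q s' x} := joinRel_refl p q s'
    rw [← hss'] at h0
    exact h0
  have h2 : (s':ℕ) ≤ (s:ℕ) := hs.2.2 s' h1
  have h3 : (s:ℕ) ≤ (s':ℕ) := hs'.2.2 s (joinRel_symm h1)
  exact Fin.ext (le_antisymm h3 h2)

lemma finRotate_mk {M : ℕ} (u : ℕ) (hu : u + 1 < M) :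
    finRotate M ⟨u, by omega⟩ = ⟨u + 1, hu⟩ := by
  obtain ⟨k, rfl⟩ : ∃ k, M = k + 1 := ⟨M - 1, by omega⟩
  rw [finRotate_succ_apply]
  ext
  simp [Fin.add_def, Fin.val_one']
  omega

lemma chain_step {p q : Equiv.Perm (Fin (2*n))}
    {x : (Fin (2 * n) → Fin N) × (Fin (2 * n) → Fin N)}
    (hx : x ∈ tupleSet n N ε σ p q) (u : ℕ) (hu : u + 1 < 2*n) :
    x.1 ⟨u + 1, hu⟩ = x.2 ⟨u, by omega⟩ := by
  obtain ⟨-, hchain, -, -⟩ := Finset.mem_filter.mp hx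
  rw [hchain ⟨u, by omega⟩, finRotate_mk u hu]

lemma klMap_congr {x x' : (Fin (2 * n) → Fin N) × (Fin (2 * n) → Fin N)} {s : Fin (2*n)}
    (h1 : x.1 s = x'.1 s) (h2 : x.2 s = x'.2 s) :
    klMap ε σ x s = klMap ε σ x' s := by
  unfold klMap; rw [h1, h2]

lemma klMap_inj {x x' : (Fin (2 * n) → Fin N) × (Fin (2 * n) → Fin N)} {s : Fin (2*n)}
    (h : klMap ε σ x s = klMap ε σ x' s) :
    x.1 s = x'.1 s ∧ x.2 s = x'.2 s := by
  by_cases hε : ε s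
  · simp only [klMap, if_pos hε] at h
    have := (σ s).injective h
    exact ⟨congrArg Prod.fst this, congrArg Prod.snd this⟩
  · simp only [klMap, if_neg hε] at h
    have := (σ s).injective h
    exact ⟨congrArg Prod.snd this, congrArg Prod.fst this⟩

lemma reconstruct {p q : Equiv.Perm (Fin (2*n))}
    (hpf : ∀ s, p s ≠ s) (hqf : ∀ s, q s ≠ s)
    (m T : ℕ) (hm : 1 ≤ m) (hmT : m ≤ T)
    {x x' : (Fin (2 * n) → Fin N) × (Fin (2 * n) → Fin N)}
    (hx : x ∈ tupleSet n N ε σ p q) (hx' : x' ∈ tupleSet n N ε σ p q)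
    (h1 : ∀ s : Fin (2*n), (s:ℕ) < m → x.1 s = x'.1 s ∧ x.2 s = x'.2 s)
    (h2 : ∀ s : Fin (2*n), m ≤ (s:ℕ) → (s:ℕ) < T → s ∉ closSet p q m T → x.2 s = x'.2 s) :
    ∀ s : Fin (2*n), (s:ℕ) < T → x.1 s = x'.1 s ∧ x.2 s = x'.2 s := by
  obtain ⟨-, -, hpk, hql⟩ := Finset.mem_filter.mp hx
  obtain ⟨-, -, hpk', hql'⟩ := Finset.mem_filter.mp hx'
  suffices H : ∀ u : ℕ, ∀ (hu : u < 2*n), u < T →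
      x.1 ⟨u, hu⟩ = x'.1 ⟨u, hu⟩ ∧ x.2 ⟨u, hu⟩ = x'.2 ⟨u, hu⟩ by
    intro s hs
    have := H s.1 s.2 hs
    simpa using this
  intro u
  induction u using Nat.strong_induction_on with
  | _ u IH =>
    intro hu huT
    by_cases hum : u < m
    · exact h1 ⟨u, hu⟩ hum
    push_neg at hum
    have hfst : x.1 ⟨u, hu⟩ = x'.1 ⟨u, hu⟩ := by
      obtain ⟨v, rfl⟩ : ∃ v, u = v + 1 := ⟨u - 1, by omega⟩
      rw [chain_step hx v hu, chain_step hx' v hu]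
      exact (IH v (by omega) (by omega) (by omega)).2
    refine ⟨hfst, ?_⟩
    by_cases hcl : (⟨u, hu⟩ : Fin (2*n)) ∈ closSet p q m T
    · set s : Fin (2*n) := ⟨u, hu⟩ with hsdef
      obtain ⟨-, -, hmax⟩ := mem_closSet.mp hcl
      have hsval : (s : ℕ) = u := rfl
      have hps : joinRel p q s (p s) := Relation.EqvGen.rel _ _ (Or.inl rfl)
      have hqs : joinRel p q s (q s) := Relation.EqvGen.rel _ _ (Or.inr rfl)
      have hplt : ((p s : Fin (2*n)) : ℕ) < u := by
        have h1 := hmax (p s) hps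
        have h2 : p s ≠ s := hpf s
        have : ((p s : Fin (2*n)) : ℕ) ≠ u := fun hc => h2 (Fin.ext hc)
        have := Fin.le_def.mp h1
        omega
      have hqlt : ((q s : Fin (2*n)) : ℕ) < u := by
        have h1 := hmax (q s) hqs
        have h2 : q s ≠ s := hqf s
        have : ((q s : Fin (2*n)) : ℕ) ≠ u := fun hc => h2 (Fin.ext hc)
        have := Fin.le_def.mp h1
        omega
      have IHp := IH (p s).1 hplt (p s).2 (by omega)
      have IHq := IH (q s).1 hqlt (q s).2 (by omega)
      simp only [Fin.eta] at IHp IHq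
      have ekP : klMap ε σ x (p s) = klMap ε σ x' (p s) := klMap_congr IHp.1 IHp.2
      have ekQ : klMap ε σ x (q s) = klMap ε σ x' (q s) := klMap_congr IHq.1 IHq.2
      have hk : (klMap ε σ x s).1 = (klMap ε σ x' s).1 := by
        rw [hpk s, hpk' s, ekP]
      have hl : (klMap ε σ x s).2 = (klMap ε σ x' s).2 := by
        rw [hql s, hql' s, ekQ]
      have : klMap ε σ x s = klMap ε σ x' s := Prod.ext hk hl
      exact (klMap_inj this).2
    · exact h2 ⟨u, hu⟩ hum huT hcl

end Aux

/-- `F(m + m') ≤ F(m) ⬝ N^{m' - t}` where `t` is the number of blocks `B` of `p ∨ q` with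
`m < max B ≤ m + m'` (stated multiplicatively, as `F(m+m') ⬝ N^t ≤ F(m) ⬝ N^{m'}`). -/
theorem stmt7 (n N : ℕ) (hn : 1 ≤ n) (hN : 1 ≤ N)
    (ε : Fin (2 * n) → Bool) (σ : Fin (2 * n) → Equiv.Perm (Fin N × Fin N))
    (p q : Equiv.Perm (Fin (2 * n)))
    (hp : Function.Involutive p) (hq : Function.Involutive q)
    (hpf : ∀ s, p s ≠ s) (hqf : ∀ s, q s ≠ s)
    (hpε : ∀ s, ε (p s) ≠ ε s) (hqε : ∀ s, ε (q s) ≠ ε s)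
    (m m' : ℕ) (hm : 1 ≤ m) (hm' : 1 ≤ m') (hmm : m + m' ≤ 2 * n) :
    Fcnt n N ε σ p q (initSeg n (m + m')) *
        N ^ (Set.ncard {B : Set (Fin (2 * n)) | (∃ a, B = {x | joinRel p q a x}) ∧
          (∃ x ∈ B, m ≤ (x : ℕ)) ∧ ∀ x ∈ B, (x : ℕ) < m + m'}) ≤
      Fcnt n N ε σ p q (initSeg n m) * N ^ m' := by
  classical
  rw [ncard_blocks p q m (m + m')]
  set T := m + m' with hT
  have hsub : ∀ s : Fin (2*n), s ∈ initSeg n m → s ∈ initSeg n T := by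
    intro s hs
    simp only [initSeg, Finset.mem_filter, Finset.mem_univ, true_and] at hs ⊢
    omega
  let er : Fin m' → Fin (2*n) := fun r => ⟨m + r.1, by have := r.2; omega⟩
  have hrST : ∀ r : Fin m', er r ∈ initSeg n T := by
    intro r
    simp only [initSeg, Finset.mem_filter, Finset.mem_univ, true_and, er]
    have := r.2
    omega
  let Φ : (({a // a ∈ initSeg n T} → Fin N × Fin N) × ({a // a ∈ closSet p q m T} → Fin N)) →
      (({a // a ∈ initSeg n m} → Fin N × Fin N) × (Fin m' → Fin N)) :=
    fun yw => (fun s => yw.1 ⟨s.1, hsub s.1 s.2⟩,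
      fun r => if h : er r ∈ closSet p q m T then yw.2 ⟨er r, h⟩ else (yw.1 ⟨er r, hrST r⟩).2)
  have key : (((tupleSet n N ε σ p q).image
        (fun x => fun s : {a // a ∈ initSeg n T} => (x.1 s.1, x.2 s.1))) ×ˢ
        (Finset.univ : Finset ({a // a ∈ closSet p q m T} → Fin N))).card ≤
      (((tupleSet n N ε σ p q).image
        (fun x => fun s : {a // a ∈ initSeg n m} => (x.1 s.1, x.2 s.1))) ×ˢ
        (Finset.univ : Finset (Fin m' → Fin N))).card := by
    apply Finset.card_le_card_of_injOn Φ
    · rintro ⟨y, w⟩ hyw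
      rw [Finset.mem_coe, Finset.mem_product] at hyw ⊢
      obtain ⟨hy, -⟩ := hyw
      refine ⟨?_, Finset.mem_univ _⟩
      rw [Finset.mem_image]
      rw [Finset.mem_image] at hy
      obtain ⟨x, hx, hyx0⟩ := hy
      have hyx : (fun s : {a // a ∈ initSeg n T} => (x.1 s.1, x.2 s.1)) = y := hyx0
      refine ⟨x, hx, ?_⟩
      funext s
      show (x.1 s.1, x.2 s.1) = y ⟨s.1, hsub s.1 s.2⟩
      rw [← hyx]
    · rintro ⟨y, w⟩ hyw ⟨y', w'⟩ hyw' heq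
      rw [Finset.mem_coe, Finset.mem_product] at hyw hyw'
      obtain ⟨hy, -⟩ := hyw
      obtain ⟨hy', -⟩ := hyw'
      rw [Finset.mem_image] at hy hy'
      obtain ⟨x, hx, hyx0⟩ := hy
      obtain ⟨x', hx', hyx0'⟩ := hy'
      have hyx : (fun s : {a // a ∈ initSeg n T} => (x.1 s.1, x.2 s.1)) = y := hyx0
      have hyx' : (fun s : {a // a ∈ initSeg n T} => (x'.1 s.1, x'.2 s.1)) = y' := hyx0'
      have hfst := congrArg Prod.fst heq
      have hsnd := congrArg Prod.snd heq
      simp only [Φ] at hfst hsnd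
      have h1 : ∀ s : Fin (2*n), (s:ℕ) < m → x.1 s = x'.1 s ∧ x.2 s = x'.2 s := by
        intro s hs
        have hsSm : s ∈ initSeg n m := by
          simp only [initSeg, Finset.mem_filter, Finset.mem_univ, true_and]
          exact hs
        have h := congrFun hfst ⟨s, hsSm⟩
        simp only [← hyx, ← hyx'] at h
        exact ⟨congrArg Prod.fst h, congrArg Prod.snd h⟩
      have h2 : ∀ s : Fin (2*n), m ≤ (s:ℕ) → (s:ℕ) < T → s ∉ closSet p q m T →
          x.2 s = x'.2 s := by
        intro s hms hsT hcl
        have hr : (s:ℕ) - m < m' := by omega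
        have hers : er ⟨(s:ℕ) - m, hr⟩ = s := by
          apply Fin.ext
          show m + ((s:ℕ) - m) = (s:ℕ)
          omega
        have h := congrFun hsnd ⟨(s:ℕ) - m, hr⟩
        have hnotin : er ⟨(s:ℕ) - m, hr⟩ ∉ closSet p q m T := by
          rw [hers]; exact hcl
        rw [dif_neg hnotin, dif_neg hnotin] at h
        have hsmem : s ∈ initSeg n T := by rw [← hers]; exact hrST _
        have hsub2 : (⟨er ⟨(s:ℕ) - m, hr⟩, hrST _⟩ : {a // a ∈ initSeg n T}) = ⟨s, hsmem⟩ :=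
          Subtype.ext hers
        rw [hsub2] at h
        simp only [← hyx, ← hyx'] at h
        exact h
      have hrec := reconstruct hpf hqf m T hm (by omega) hx hx' h1 h2
      have hy_eq : y = y' := by
        funext s
        have hsT : (s.1 : ℕ) < T := by
          have h := s.2
          simp only [initSeg, Finset.mem_filter, Finset.mem_univ, true_and] at h
          exact h
        have hh := hrec s.1 hsT
        rw [← hyx, ← hyx']
        show (x.1 s.1, x.2 s.1) = (x'.1 s.1, x'.2 s.1)
        rw [hh.1, hh.2]
      have hw_eq : w = w' := by
        funext c
        have hc := mem_closSet.mp c.2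
        obtain ⟨hmc, hcT, -⟩ := hc
        have hr : (c.1 : ℕ) - m < m' := by omega
        have herc : er ⟨(c.1:ℕ) - m, hr⟩ = c.1 := by
          apply Fin.ext
          show m + ((c.1:ℕ) - m) = (c.1:ℕ)
          omega
        have hin : er ⟨(c.1:ℕ) - m, hr⟩ ∈ closSet p q m T := by rw [herc]; exact c.2
        have h := congrFun hsnd ⟨(c.1:ℕ) - m, hr⟩
        rw [dif_pos hin, dif_pos hin] at h
        have hce : (⟨er ⟨(c.1:ℕ) - m, hr⟩, hin⟩ : {a // a ∈ closSet p q m T}) = c :=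
          Subtype.ext herc
        rwa [hce] at h
      rw [Prod.mk.injEq]
      exact ⟨hy_eq, hw_eq⟩
  have e1 : Fcnt n N ε σ p q (initSeg n T) * N ^ (closSet p q m T).card =
      (((tupleSet n N ε σ p q).image
        (fun x => fun s : {a // a ∈ initSeg n T} => (x.1 s.1, x.2 s.1))) ×ˢ
        (Finset.univ : Finset ({a // a ∈ closSet p q m T} → Fin N))).card := by
    rw [Finset.card_product]
    congr 1
    simp [Finset.card_univ, Fintype.card_fun]
  have e2 : Fcnt n N ε σ p q (initSeg n m) * N ^ m' =
      (((tupleSet n N ε σ p q).image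
        (fun x => fun s : {a // a ∈ initSeg n m} => (x.1 s.1, x.2 s.1))) ×ˢ
        (Finset.univ : Finset (Fin m' → Fin N))).card := by
    rw [Finset.card_product]
    congr 1
    simp [Finset.card_univ, Fintype.card_fun]
  rw [e1, e2]
  exact key
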